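/- Let n = 1 and define Q(z,χ,τ) := τ + 2izχ on ℂ × ℂ × ℂ (the complexified Lewy hypersurface). Then Q is a real normal defining function of dimension 1 which is finitely nondegenerate at 0. The quadruple f(z,w) := 2z/(1 − 2iz), g(z,w) := w/(1 − 2iz), f̃(χ,τ) := (χ + τ)/2, g̃(χ,τ) := τ, defined for (z,w), (χ,τ) near 0, is an HSPM sending (ℳ,0) into (ℳ,0), and satisfies ∂f/∂z(z,0) = 2/(1 − 2iz)² (a nonconstant function of z) while ∂f̃/∂χ(χ,0) ≡ 1/2 (a constant function of χ); in particular the Taylor expansions at 0 of ∂f/∂z(z,0) and ∂f̃/∂χ(χ,0) agree, up to conjugation of coefficients and a nonzero constant factor, only in their lowest-order terms. -/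

import Mathlib

open Filter Topology Complex

namespace HSPMpaper

variable {n : ℕ}

/-- Partial derivative of `F` in the `i`-th coordinate direction. -/
noncomputable def pd (i : Fin n) (F : (Fin n → ℂ) → ℂ) : (Fin n → ℂ) → ℂ :=
  fun z => fderiv ℂ F z (Pi.single i 1)

/-- Iterated partial derivative `∂^α` for a multi-index `α`. -/
noncomputable def mpd (α : Fin n → ℕ) (F : (Fin n → ℂ) → ℂ) : (Fin n → ℂ) → ℂ :=
  ((List.ofFn fun i : Fin n => (pd i)^[α i]).foldr (· ∘ ·) id) F

/-- Componentwise complex conjugation on `ℂⁿ`. -/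
def conjV (z : Fin n → ℂ) : Fin n → ℂ := fun i => starRingEnd ℂ (z i)

/-- The conjugate defining function `Q̄(χ,z,τ) = conj (Q (conj χ) (conj z) (conj τ))`. -/
def QBar (Q : (Fin n → ℂ) → (Fin n → ℂ) → ℂ → ℂ) : (Fin n → ℂ) → (Fin n → ℂ) → ℂ → ℂ :=
  fun χ z τ => starRingEnd ℂ (Q (conjV χ) (conjV z) (starRingEnd ℂ τ))

/-- `Q` is a normal defining function (of dimension `n`): holomorphic near the origin of
`ℂⁿ × ℂⁿ × ℂ` and satisfying `Q(0,χ,τ) = τ` and `Q(z,0,τ) = τ` near `0`. -/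
def IsNormalDF (Q : (Fin n → ℂ) → (Fin n → ℂ) → ℂ → ℂ) : Prop :=
  (∀ᶠ p in 𝓝 (0 : (Fin n → ℂ) × (Fin n → ℂ) × ℂ),
      AnalyticAt ℂ (fun q : (Fin n → ℂ) × (Fin n → ℂ) × ℂ => Q q.1 q.2.1 q.2.2) p) ∧
  (∀ᶠ p in 𝓝 (0 : (Fin n → ℂ) × (Fin n → ℂ) × ℂ),
      Q 0 p.2.1 p.2.2 = p.2.2 ∧ Q p.1 0 p.2.2 = p.2.2)

/-- `Q` is a real normal defining function: normal and `Q(z,χ,Q̄(χ,z,w)) = w` near `0`. -/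
def IsRealNormalDF (Q : (Fin n → ℂ) → (Fin n → ℂ) → ℂ → ℂ) : Prop :=
  IsNormalDF Q ∧
  ∀ᶠ p in 𝓝 (0 : (Fin n → ℂ) × (Fin n → ℂ) × ℂ),
    Q p.1 p.2.1 (QBar Q p.2.1 p.1 p.2.2) = p.2.2

/-- `(f,g,f̃,g̃)` is a holomorphic Segre preserving map sending `(ℳ,0)` into `(ℳ',0)`. -/
def IsHSPM (Q Q' : (Fin n → ℂ) → (Fin n → ℂ) → ℂ → ℂ)
    (f : (Fin n → ℂ) → ℂ → Fin n → ℂ) (g : (Fin n → ℂ) → ℂ → ℂ)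
    (ft : (Fin n → ℂ) → ℂ → Fin n → ℂ) (gt : (Fin n → ℂ) → ℂ → ℂ) : Prop :=
  (∀ᶠ p in 𝓝 (0 : (Fin n → ℂ) × ℂ), AnalyticAt ℂ (fun q : (Fin n → ℂ) × ℂ => f q.1 q.2) p) ∧
  (∀ᶠ p in 𝓝 (0 : (Fin n → ℂ) × ℂ), AnalyticAt ℂ (fun q : (Fin n → ℂ) × ℂ => g q.1 q.2) p) ∧
  (∀ᶠ p in 𝓝 (0 : (Fin n → ℂ) × ℂ), AnalyticAt ℂ (fun q : (Fin n → ℂ) × ℂ => ft q.1 q.2) p) ∧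
  (∀ᶠ p in 𝓝 (0 : (Fin n → ℂ) × ℂ), AnalyticAt ℂ (fun q : (Fin n → ℂ) × ℂ => gt q.1 q.2) p) ∧
  f 0 0 = 0 ∧ g 0 0 = 0 ∧ ft 0 0 = 0 ∧ gt 0 0 = 0 ∧
  ∀ᶠ p in 𝓝 (0 : (Fin n → ℂ) × (Fin n → ℂ) × ℂ),
    g p.1 (Q p.1 p.2.1 p.2.2) =
      Q' (f p.1 (Q p.1 p.2.1 p.2.2)) (ft p.2.1 p.2.2) (gt p.2.1 p.2.2)

/-- `M` is of finite type at `0`: `(z,χ) ↦ Q(z,χ,0)` does not vanish identically near `0`. -/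
def FiniteType (Q : (Fin n → ℂ) → (Fin n → ℂ) → ℂ → ℂ) : Prop :=
  ¬ ∀ᶠ p in 𝓝 (0 : (Fin n → ℂ) × (Fin n → ℂ)), Q p.1 p.2 0 = 0

/-- Jacobian matrix of `z ↦ f(z,0)` at `z`. -/
noncomputable def jacz (f : (Fin n → ℂ) → ℂ → Fin n → ℂ) (z : Fin n → ℂ) :
    Matrix (Fin n) (Fin n) ℂ :=
  Matrix.of fun i j => pd j (fun z' => f z' 0 i) z

/-- `ℋ` is Segre transversal to `ℳ'` at `0`: `∂g/∂w(0,0) ≠ 0`. -/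
noncomputable def SegreTransversal (g : (Fin n → ℂ) → ℂ → ℂ) : Prop :=
  deriv (fun w => g 0 w) 0 ≠ 0

/-- `ℋ` is totally Segre nondegenerate at `0`. -/
def TotallySegreNondeg (f ft : (Fin n → ℂ) → ℂ → Fin n → ℂ) : Prop :=
  (¬ ∀ᶠ z in 𝓝 (0 : Fin n → ℂ), (jacz f z).det = 0) ∧
  (¬ ∀ᶠ χ in 𝓝 (0 : Fin n → ℂ), (jacz ft χ).det = 0)

/-- `ℋ` is transversally null: `g ≡ 0` and `g̃ ≡ 0` near `0`. -/
def TransversallyNull (g gt : (Fin n → ℂ) → ℂ → ℂ) : Prop :=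
  (∀ᶠ p in 𝓝 (0 : (Fin n → ℂ) × ℂ), g p.1 p.2 = 0) ∧
  (∀ᶠ p in 𝓝 (0 : (Fin n → ℂ) × ℂ), gt p.1 p.2 = 0)

/-- The `k`-th coordinate direction in `ℂⁿ × ℂ`. -/
noncomputable def dirCT (n : ℕ) (k : Fin (n + 1)) : (Fin n → ℂ) × ℂ :=
  if h : (k : ℕ) < n then (Pi.single ⟨k, h⟩ 1, 0) else (0, 1)

/-- `M` is holomorphically nondegenerate at `0`: for some `K`, the map
`(χ,τ) ↦ (∂_z^α Q(0,χ,τ))_{|α| ≤ K}` has generic rank `n+1`. -/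
def HolNondeg (Q : (Fin n → ℂ) → (Fin n → ℂ) → ℂ → ℂ) : Prop :=
  ∃ K : ℕ, ∃ A : Fin (n + 1) → Fin n → ℕ, (∀ j, (∑ i, A j i) ≤ K) ∧
    ¬ ∀ᶠ p in 𝓝 (0 : (Fin n → ℂ) × ℂ),
      (Matrix.of fun j k : Fin (n + 1) =>
        fderiv ℂ (fun q : (Fin n → ℂ) × ℂ => mpd (A j) (fun z => Q z q.1 q.2) 0) p
          (dirCT n k)).det = 0

/-- `M` is of class `𝒞` at `0`: for some `K`, the map
`χ ↦ (∂_z^α Q(0,χ,0))_{|α| ≤ K}` has generic rank `n`. -/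
def ClassC (Q : (Fin n → ℂ) → (Fin n → ℂ) → ℂ → ℂ) : Prop :=
  ∃ K : ℕ, ∃ A : Fin n → Fin n → ℕ, (∀ j, (∑ i, A j i) ≤ K) ∧
    ¬ ∀ᶠ χ in 𝓝 (0 : Fin n → ℂ),
      (Matrix.of fun j k : Fin n =>
        pd k (fun χ' => mpd (A j) (fun z => Q z χ' 0) 0) χ).det = 0

/-- `M` is finitely nondegenerate at `0`: for some `K`, the vectors
`∂_χ ∂_z^α Q(0,0,0)`, `|α| ≤ K`, span `ℂⁿ`. -/
def FinNondeg (Q : (Fin n → ℂ) → (Fin n → ℂ) → ℂ → ℂ) : Prop :=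
  ∃ K : ℕ, Submodule.span ℂ
    {v : Fin n → ℂ | ∃ α : Fin n → ℕ, (∑ i, α i) ≤ K ∧
      v = fun i => pd i (fun χ => mpd α (fun z => Q z χ 0) 0) 0} = ⊤

/-- Full Jacobian matrix of `(z,w) ↦ (f(z,w), g(z,w))` at `p ∈ ℂⁿ × ℂ`. -/
noncomputable def jacFull (f : (Fin n → ℂ) → ℂ → Fin n → ℂ) (g : (Fin n → ℂ) → ℂ → ℂ)
    (p : (Fin n → ℂ) × ℂ) : Matrix (Fin (n + 1)) (Fin (n + 1)) ℂ :=
  Matrix.of fun i k =>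
    fderiv ℂ (fun q : (Fin n → ℂ) × ℂ => (Fin.snoc (f q.1 q.2) (g q.1 q.2) : Fin (n + 1) → ℂ) i) p (dirCT n k)

/-- The degree-`d` homogeneous term of the Taylor series of `φ` at `0`. -/
noncomputable def homogTerm (d : ℕ) (φ : (Fin n → ℂ) → ℂ) : (Fin n → ℂ) → ℂ :=
  fun z => iteratedFDeriv ℂ d φ 0 (fun _ => z) / (d.factorial : ℂ)

/-- The order of vanishing of `φ` at `0`. -/
noncomputable def vanishOrder (φ : (Fin n → ℂ) → ℂ) : ℕ :=
  sInf {d | homogTerm d φ ≠ 0}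



/-- Auxiliary: partial derivative of a function of the single coordinate. -/
lemma pd_comp {φ : ℂ → ℂ} {c : ℂ} {z : Fin 1 → ℂ} (h : HasDerivAt φ c (z 0)) :
    pd 0 (fun z' : Fin 1 → ℂ => φ (z' 0)) z = c := by
  have hπ : HasFDerivAt (fun z' : Fin 1 → ℂ => z' 0)
      (ContinuousLinearMap.proj (R := ℂ) (φ := fun _ : Fin 1 => ℂ) 0) z :=
    (ContinuousLinearMap.proj (R := ℂ) (φ := fun _ : Fin 1 => ℂ) 0).hasFDerivAt
  have h2 := h.comp_hasFDerivAt z hπ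
  have h3 : HasFDerivAt (fun z' : Fin 1 → ℂ => φ (z' 0))
      (c • ContinuousLinearMap.proj (R := ℂ) (φ := fun _ : Fin 1 => ℂ) 0) z := h2
  unfold pd
  rw [h3.fderiv]
  simp

lemma mpd_one (F : (Fin 1 → ℂ) → ℂ) : mpd (fun _ => 1) F = pd 0 F := by
  simp [mpd, List.ofFn_succ]

lemma anz2 (p : (Fin 1 → ℂ) × ℂ) : AnalyticAt ℂ (fun q : (Fin 1 → ℂ) × ℂ => q.1 0) p :=
  ((ContinuousLinearMap.proj (R := ℂ) (φ := fun _ : Fin 1 => ℂ) 0).comp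
    (ContinuousLinearMap.fst ℂ (Fin 1 → ℂ) ℂ)).analyticAt p

lemma anw2 (p : (Fin 1 → ℂ) × ℂ) : AnalyticAt ℂ (fun q : (Fin 1 → ℂ) × ℂ => q.2) p :=
  (ContinuousLinearMap.snd ℂ (Fin 1 → ℂ) ℂ).analyticAt p

lemma anz3 (p : (Fin 1 → ℂ) × (Fin 1 → ℂ) × ℂ) :
    AnalyticAt ℂ (fun q : (Fin 1 → ℂ) × (Fin 1 → ℂ) × ℂ => q.1 0) p :=
  ((ContinuousLinearMap.proj (R := ℂ) (φ := fun _ : Fin 1 => ℂ) 0).comp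
    (ContinuousLinearMap.fst ℂ (Fin 1 → ℂ) ((Fin 1 → ℂ) × ℂ))).analyticAt p

lemma anχ3 (p : (Fin 1 → ℂ) × (Fin 1 → ℂ) × ℂ) :
    AnalyticAt ℂ (fun q : (Fin 1 → ℂ) × (Fin 1 → ℂ) × ℂ => q.2.1 0) p :=
  ((ContinuousLinearMap.proj (R := ℂ) (φ := fun _ : Fin 1 => ℂ) 0).comp
    ((ContinuousLinearMap.fst ℂ (Fin 1 → ℂ) ℂ).comp
      (ContinuousLinearMap.snd ℂ (Fin 1 → ℂ) ((Fin 1 → ℂ) × ℂ)))).analyticAt p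

lemma anτ3 (p : (Fin 1 → ℂ) × (Fin 1 → ℂ) × ℂ) :
    AnalyticAt ℂ (fun q : (Fin 1 → ℂ) × (Fin 1 → ℂ) × ℂ => q.2.2) p :=
  ((ContinuousLinearMap.snd ℂ (Fin 1 → ℂ) ℂ).comp
    (ContinuousLinearMap.snd ℂ (Fin 1 → ℂ) ((Fin 1 → ℂ) × ℂ))).analyticAt p

lemma imfalse (t : ℝ) (ht : 0 < t) (h : ((1:ℂ) - 2*Complex.I*(t:ℂ))^2 = 1) : False := by
  have h2 := congrArg Complex.im h
  simp [pow_two, Complex.mul_im, Complex.mul_re, Complex.I_re, Complex.I_im,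
    Complex.ofReal_re, Complex.ofReal_im] at h2
  nlinarith

/-- Example 3.4: an explicit HSPM of the complexified Lewy hypersurface
`Q(z,χ,τ) = τ + 2izχ` into itself, with `∂f/∂z(z,0) = 2/(1-2iz)²` and `∂f̃/∂χ(χ,0) ≡ 1/2`, so
that the Taylor expansions of the two determinants agree (up to conjugation and a nonzero
constant) only in their lowest-order terms. -/
theorem statement16 :
    let Q : (Fin 1 → ℂ) → (Fin 1 → ℂ) → ℂ → ℂ :=
      fun z χ τ => τ + 2 * Complex.I * (z 0 * χ 0)
    let f : (Fin 1 → ℂ) → ℂ → Fin 1 → ℂ :=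
      fun z _ => fun _ => 2 * z 0 / (1 - 2 * Complex.I * z 0)
    let g : (Fin 1 → ℂ) → ℂ → ℂ := fun z w => w / (1 - 2 * Complex.I * z 0)
    let ft : (Fin 1 → ℂ) → ℂ → Fin 1 → ℂ := fun χ τ => fun _ => (χ 0 + τ) / 2
    let gt : (Fin 1 → ℂ) → ℂ → ℂ := fun _ τ => τ
    IsRealNormalDF Q ∧ FinNondeg Q ∧
    IsHSPM Q Q f g ft gt ∧
    (∀ᶠ z in 𝓝 (0 : Fin 1 → ℂ),
      pd 0 (fun z' => f z' 0 0) z = 2 / (1 - 2 * Complex.I * z 0) ^ 2) ∧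
    (∀ᶠ χ in 𝓝 (0 : Fin 1 → ℂ), pd 0 (fun χ' => ft χ' 0 0) χ = 1 / 2) ∧
    (∃ c : ℂ, c ≠ 0 ∧
      pd 0 (fun z' => f z' 0 0) 0 = c * starRingEnd ℂ (pd 0 (fun χ' => ft χ' 0 0) 0)) ∧
    (¬ ∃ c : ℂ, ∀ᶠ z in 𝓝 (0 : Fin 1 → ℂ),
      pd 0 (fun z' => f z' 0 0) z = c * starRingEnd ℂ (pd 0 (fun χ' => ft χ' 0 0) (conjV z))) := by
  intro Q f g ft gt
  -- basic neighborhoods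
  have hVopen : IsOpen {z : Fin 1 → ℂ | (1:ℂ) - 2*Complex.I*z 0 ≠ 0} :=
    isOpen_compl_singleton.preimage (by fun_prop)
  have hV0 : (0 : Fin 1 → ℂ) ∈ {z : Fin 1 → ℂ | (1:ℂ) - 2*Complex.I*z 0 ≠ 0} := by
    simp
  -- the closed form for ∂f/∂z
  have hfz : ∀ᶠ z in 𝓝 (0 : Fin 1 → ℂ),
      pd 0 (fun z' => f z' 0 0) z = 2 / (1 - 2 * Complex.I * z 0) ^ 2 := by
    filter_upwards [hVopen.mem_nhds hV0] with z hz
    have hnum : HasDerivAt (fun t : ℂ => 2*t) 2 (z 0) := by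
      simpa using (hasDerivAt_id (z 0)).const_mul (2:ℂ)
    have hden : HasDerivAt (fun t : ℂ => 1 - 2*Complex.I*t) (-(2*Complex.I)) (z 0) := by
      simpa using ((hasDerivAt_id (z 0)).const_mul (2*Complex.I)).const_sub 1
    have h := hnum.div hden hz
    have := pd_comp (φ := fun t : ℂ => 2*t/(1-2*Complex.I*t)) h
    rw [show (fun z' : Fin 1 → ℂ => f z' 0 0) = fun z' => 2*z' 0/(1-2*Complex.I*z' 0) from rfl]
    rw [this]
    field_simp
    ring
  -- ∂f̃/∂χ is constantly 1/2
  have hftχ : ∀ χ : Fin 1 → ℂ, pd 0 (fun χ' => ft χ' 0 0) χ = 1/2 := by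
    intro χ
    have h : HasDerivAt (fun t : ℂ => (t + 0)/2) (1/2) (χ 0) := by
      simpa using ((hasDerivAt_id (χ 0)).add_const (0:ℂ)).div_const (2:ℂ)
    exact pd_comp (φ := fun t : ℂ => (t + 0)/2) h
  refine ⟨⟨⟨?_, ?_⟩, ?_⟩, ?_, ?_, ?_, ?_, ?_, ?_⟩
  · -- analyticity of Q
    exact Eventually.of_forall fun p =>
      (anτ3 p).add (analyticAt_const.mul ((anz3 p).mul (anχ3 p)))
  · -- normality
    exact Eventually.of_forall fun p => ⟨by simp [Q], by simp [Q]⟩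
  · -- reality
    refine Eventually.of_forall fun p => ?_
    simp only [Q, QBar, conjV, map_add, map_mul, Complex.conj_I, Complex.conj_conj, map_ofNat]
    ring
  · -- finite nondegeneracy
    refine ⟨1, ?_⟩
    have hval : (fun i : Fin 1 => pd i (fun χ => mpd (fun _ => 1) (fun z => Q z χ 0) 0) 0)
        = fun _ : Fin 1 => 2*Complex.I := by
      funext i
      have hi : i = 0 := Subsingleton.elim i 0
      subst hi
      have hin : (fun χ : Fin 1 → ℂ => mpd (fun _ => 1) (fun z => Q z χ 0) 0)
          = fun χ : Fin 1 → ℂ => 2*Complex.I*(χ 0) := by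
        funext χ
        rw [mpd_one]
        have h : HasDerivAt (fun t : ℂ => (0:ℂ) + 2*Complex.I*(t * χ 0))
            (2*Complex.I*(χ 0)) ((0 : Fin 1 → ℂ) 0) := by
          simpa using (((hasDerivAt_id ((0 : Fin 1 → ℂ) 0)).mul_const (χ 0)).const_mul
            (2*Complex.I)).const_add 0
        exact pd_comp (φ := fun t : ℂ => (0:ℂ) + 2*Complex.I*(t * χ 0)) h
      rw [hin]
      have h : HasDerivAt (fun t : ℂ => 2*Complex.I*t) (2*Complex.I) ((0 : Fin 1 → ℂ) 0) := by
        simpa using (hasDerivAt_id ((0 : Fin 1 → ℂ) 0)).const_mul (2*Complex.I)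
      exact pd_comp (φ := fun t : ℂ => 2*Complex.I*t) h
    rw [eq_top_iff]
    intro x _
    have hmem : (fun _ : Fin 1 => 2*Complex.I) ∈
        {v : Fin 1 → ℂ | ∃ α : Fin 1 → ℕ, (∑ i, α i) ≤ 1 ∧
          v = fun i => pd i (fun χ => mpd α (fun z => Q z χ 0) 0) 0} :=
      ⟨fun _ => 1, by simp, hval.symm⟩
    have : x = (x 0 / (2*Complex.I)) • (fun _ : Fin 1 => 2*Complex.I) := by
      funext i
      have hi : i = 0 := Subsingleton.elim i 0
      subst hi
      have hI : (2*Complex.I) ≠ 0 := by simp [Complex.I_ne_zero]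
      simp [div_mul_cancel₀, hI]
    rw [this]
    exact Submodule.smul_mem _ _ (Submodule.subset_span hmem)
  · -- HSPM
    have hUopen : IsOpen {p : (Fin 1 → ℂ) × ℂ | (1:ℂ) - 2*Complex.I*p.1 0 ≠ 0} :=
      isOpen_compl_singleton.preimage (by fun_prop)
    have hU0 : ((0,0) : (Fin 1 → ℂ) × ℂ) ∈
        {p : (Fin 1 → ℂ) × ℂ | (1:ℂ) - 2*Complex.I*p.1 0 ≠ 0} := by simp
    have hU3open : IsOpen {p : (Fin 1 → ℂ) × (Fin 1 → ℂ) × ℂ | (1:ℂ) - 2*Complex.I*p.1 0 ≠ 0} :=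
      isOpen_compl_singleton.preimage (by fun_prop)
    have hU30 : ((0,0,0) : (Fin 1 → ℂ) × (Fin 1 → ℂ) × ℂ) ∈
        {p : (Fin 1 → ℂ) × (Fin 1 → ℂ) × ℂ | (1:ℂ) - 2*Complex.I*p.1 0 ≠ 0} := by simp
    refine ⟨?_, ?_, ?_, ?_, ?_, ?_, ?_, ?_, ?_⟩
    · filter_upwards [hUopen.mem_nhds hU0] with p hp
      exact analyticAt_pi_iff.2 fun _ =>
        (analyticAt_const.mul (anz2 p)).div
          (analyticAt_const.sub (analyticAt_const.mul (anz2 p))) hp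
    · filter_upwards [hUopen.mem_nhds hU0] with p hp
      exact (anw2 p).div (analyticAt_const.sub (analyticAt_const.mul (anz2 p))) hp
    · refine Eventually.of_forall fun p => ?_
      exact analyticAt_pi_iff.2 fun _ =>
        ((anz2 p).add (anw2 p)).div analyticAt_const two_ne_zero
    · exact Eventually.of_forall fun p => anw2 p
    · funext i; simp [f]
    · simp [g]
    · funext i; simp [ft]
    · simp [gt]
    · filter_upwards [hU3open.mem_nhds hU30] with p hp
      simp only [Q, f, g, ft, gt]
      field_simp
      ring
  · exact hfz
  · exact Eventually.of_forall hftχ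
  · -- lowest order terms agree
    refine ⟨4, by norm_num, ?_⟩
    rw [hfz.self_of_nhds, hftχ 0]
    norm_num [Complex.ext_iff]
  · -- but not all terms
    rintro ⟨c, hc⟩
    have hco : ∀ᶠ z in 𝓝 (0 : Fin 1 → ℂ),
        pd 0 (fun z' => f z' 0 0) z = 2 / (1 - 2 * Complex.I * z 0) ^ 2 ∧
        pd 0 (fun z' => f z' 0 0) z = c * (1/2) := by
      filter_upwards [hfz, hc] with z h1 h2
      refine ⟨h1, ?_⟩
      rw [h2, hftχ (conjV z)]
      norm_num [Complex.ext_iff]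
    rw [Metric.eventually_nhds_iff] at hco
    obtain ⟨ε, hε, hball⟩ := hco
    have h0 := hball (y := 0) (by simpa using hε)
    set t : ℝ := ε/2 with ht
    have htpos : 0 < t := by positivity
    have hzdist : dist (fun _ : Fin 1 => (t:ℂ)) (0 : Fin 1 → ℂ) < ε := by
      rw [dist_pi_lt_iff hε]
      intro i
      simp only [Pi.zero_apply, Complex.dist_eq, sub_zero, Complex.norm_real, Real.norm_eq_abs]
      rw [abs_of_pos htpos]
      simp only [ht]
      linarith
    have hzt := hball hzdist
    have h0' : (2:ℂ) = c * (1/2) := by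
      have := h0.1.symm.trans h0.2
      simpa using this
    have ht' : (2:ℂ) / (1 - 2*Complex.I*(t:ℂ))^2 = c * (1/2) := by
      have := hzt.1.symm.trans hzt.2
      simpa using this
    have key : (2:ℂ) / (1 - 2*Complex.I*(t:ℂ))^2 = 2 := by rw [ht', ← h0']
    have hne : ((1:ℂ) - 2*Complex.I*(t:ℂ))^2 ≠ 0 := by
      intro h
      rw [h] at key
      simp at key
    have : ((1:ℂ) - 2*Complex.I*(t:ℂ))^2 = 1 := by
      have key' := (div_eq_iff hne).1 key
      linear_combination -key' / 2
    exact imfalse t htpos this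


end HSPMpaper
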